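/- Let f : ℕ^Λ → ℤ be a monoid homomorphism, V = { c : f(c) > 0 }, O = { c : post(c) ⊆ V }, and W = { c : ∀ c' ∈ post(c), f(c') ≥ f(c) }. Then O ∩ W is semilinear. -/

import Mathlib

/-- One reaction step of a CRN with reaction set `R`. -/
def Step {Λ : Type*} (R : Set ((Λ → ℕ) × (Λ → ℕ))) (c c' : Λ → ℕ) : Prop :=
  ∃ rp ∈ R, (∀ s, rp.1 s ≤ c s) ∧ c' = fun s => c s - rp.1 s + rp.2 s

/-- Reachability: reflexive-transitive closure of `Step`. -/
def Reach {Λ : Type*} (R : Set ((Λ → ℕ) × (Λ → ℕ))) : (Λ → ℕ) → (Λ → ℕ) → Prop :=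
  Relation.ReflTransGen (Step R)

def preS {Λ : Type*} (R : Set ((Λ → ℕ) × (Λ → ℕ))) (X : Set (Λ → ℕ)) : Set (Λ → ℕ) :=
  {c | ∃ x ∈ X, Reach R c x}

def postS {Λ : Type*} (R : Set ((Λ → ℕ) × (Λ → ℕ))) (X : Set (Λ → ℕ)) : Set (Λ → ℕ) :=
  {c' | ∃ x ∈ X, Reach R x c'}

/-- A linear subset of ℕ^Λ. -/
def LinearSet {Λ : Type*} (X : Set (Λ → ℕ)) : Prop :=
  ∃ (b : Λ → ℕ) (k : ℕ) (v : Fin k → (Λ → ℕ)),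
    X = {c | ∃ n : Fin k → ℕ, c = b + ∑ i, n i • v i}

/-- A semilinear set: finite union of linear sets. -/
def Semilinear {Λ : Type*} (X : Set (Λ → ℕ)) : Prop :=
  ∃ (k : ℕ) (L : Fin k → Set (Λ → ℕ)), (∀ i, LinearSet (L i)) ∧ X = ⋃ i, L i

/-- Upward closed under the componentwise order. -/
def UpClosed {Λ : Type*} (X : Set (Λ → ℕ)) : Prop :=
  ∀ c ∈ X, ∀ c' : Λ → ℕ, c ≤ c' → c' ∈ X



section Hom
variable {Λ : Type*} {G : Type*} [AddCancelCommMonoid G]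

lemma hom_zero (H : (Λ → ℕ) → G) (hH : ∀ a b, H (a + b) = H a + H b) : H 0 = 0 := by
  have := hH 0 0
  simp only [add_zero] at this
  exact (left_eq_add.mp this)

lemma hom_smul (H : (Λ → ℕ) → G) (hH : ∀ a b, H (a + b) = H a + H b)
    (n : ℕ) (v : Λ → ℕ) : H (n • v) = n • H v := by
  induction n with
  | zero => simpa using hom_zero H hH
  | succ n ih => rw [succ_nsmul, succ_nsmul, hH, ih]

lemma hom_sum (H : (Λ → ℕ) → G) (hH : ∀ a b, H (a + b) = H a + H b)
    {k : ℕ} (n : Fin k → ℕ) (v : Fin k → (Λ → ℕ)) :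
    H (∑ i, n i • v i) = ∑ i, n i • H (v i) := by
  classical
  induction k with
  | zero => simpa using hom_zero H hH
  | succ k ih =>
      rw [Fin.sum_univ_succ, Fin.sum_univ_succ, hH, hom_smul H hH,
        ih (fun i => n i.succ) (fun i => v i.succ)]

end Hom

def natLtWO : IsWellOrder ℕ (· < ·) := inferInstance

lemma pi_nat_isPWO {Λ : Type*} [Fintype Λ] (s : Set (Λ → ℕ)) : s.IsPWO :=
  Set.isPWO_of_wellQuasiOrderedLE s

section Min
variable {Λ : Type*} [Fintype Λ]

/-- minimal elements of a set -/
def minOf (S : Set (Λ → ℕ)) : Set (Λ → ℕ) :=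
  {m | m ∈ S ∧ ∀ y ∈ S, y ≤ m → y = m}

lemma minOf_finite (S : Set (Λ → ℕ)) : (minOf S).Finite := by
  have hpwo : (minOf S).IsPWO := pi_nat_isPWO _
  refine IsAntichain.finite_of_partiallyWellOrderedOn ?_ hpwo
  intro a ha b hb hne hle
  exact hne (hb.2 a ha.1 hle)

lemma exists_min_le (S : Set (Λ → ℕ)) {c : Λ → ℕ} (hc : c ∈ S) :
    ∃ m ∈ minOf S, m ≤ c := by
  have hwf : WellFounded ((· < ·) : (Λ → ℕ) → (Λ → ℕ) → Prop) := by
    have := (pi_nat_isPWO (Set.univ : Set (Λ → ℕ))).isWF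
    rw [Set.isWF_univ_iff] at this
    exact this.wf
  obtain ⟨m, hm, hmin⟩ := hwf.has_min {x | x ∈ S ∧ x ≤ c} ⟨c, hc, le_refl _⟩
  refine ⟨m, ⟨hm.1, fun y hy hym => ?_⟩, hm.2⟩
  by_contra hne
  exact hmin y ⟨hy, le_trans hym hm.2⟩ (lt_of_le_of_ne hym hne)

end Min
section SolSet
variable {Λ : Type*} [Fintype Λ] {G : Type*} [AddCancelCommMonoid G]

lemma sub_mem_le {c m : Λ → ℕ} (h : m ≤ c) : c = m + fun s => c s - m s := by
  funext s; have h2 : m s ≤ c s := h s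
  show c s = m s + (c s - m s)
  omega

lemma hom_gen (H : (Λ → ℕ) → G) (hH : ∀ a b, H (a + b) = H a + H b)
    {k : ℕ} (v : Fin k → (Λ → ℕ))
    (hv : Set.range v = minOf ({x | H x = 0} \ {0})) :
    ∀ d, H d = 0 → ∃ n : Fin k → ℕ, d = ∑ i, n i • v i := by
  classical
  have hwf : WellFounded ((· < ·) : (Λ → ℕ) → (Λ → ℕ) → Prop) := by
    have := (pi_nat_isPWO (Set.univ : Set (Λ → ℕ))).isWF
    rw [Set.isWF_univ_iff] at this
    exact this.wf
  intro d
  induction d using hwf.induction with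
  | _ d ih =>
    intro hd
    by_cases hd0 : d = 0
    · exact ⟨0, by simp [hd0]⟩
    · obtain ⟨m, hm, hmle⟩ := exists_min_le ({x | H x = 0} \ {0}) (c := d) ⟨hd, hd0⟩
      obtain ⟨i0, hi0⟩ : ∃ i0, v i0 = m := by
        have : m ∈ Set.range v := hv ▸ hm
        exact this
      set d' : Λ → ℕ := fun s => d s - m s with hd'
      have hdm : d = m + d' := sub_mem_le hmle
      have hHd' : H d' = 0 := by
        have := hH m d'
        rw [← hdm, hd, hm.1.1] at this
        simpa using this.symm
      have hlt : d' < d := by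
        refine lt_of_le_of_ne (fun s => by show d s - m s ≤ d s; omega) ?_
        intro heq
        apply hm.1.2
        have : m = 0 := by
          funext s
          have h1 : d' s = d s := congrFun heq s
          have h2 : m s ≤ d s := hmle s
          show m s = 0
          simp only [hd'] at h1
          omega
        simp [this]
      obtain ⟨n, hn⟩ := ih d' hlt hHd'
      refine ⟨n + (Pi.single i0 1 : Fin k → ℕ), ?_⟩
      have hsum : ∑ i, (n + (Pi.single i0 1 : Fin k → ℕ)) i • v i
          = (∑ i, n i • v i) + ∑ i, (Pi.single i0 1 : Fin k → ℕ) i • v i := by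
        rw [← Finset.sum_add_distrib]
        congr 1; funext i; rw [Pi.add_apply, add_smul]
      have hsingle : ∑ i, (Pi.single i0 1 : Fin k → ℕ) i • v i = v i0 := by
        rw [Finset.sum_eq_single i0]
        · simp
        · intro b _ hb; simp [Pi.single_apply, hb]
        · simp
      rw [hsum, hsingle, ← hn, hdm, hi0]
      exact add_comm _ _

lemma solset_semilinear (H : (Λ → ℕ) → G) (hH : ∀ a b, H (a + b) = H a + H b) (T : G) :
    Semilinear {c | H c = T} := by
  classical
  obtain ⟨k0, v, _, hv⟩ := (minOf_finite ({x | H x = 0} \ {0})).fin_param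
  obtain ⟨kT, w, _, hw⟩ := (minOf_finite {c | H c = T}).fin_param
  refine ⟨kT, fun j => {c | ∃ n : Fin k0 → ℕ, c = w j + ∑ i, n i • v i}, ?_, ?_⟩
  · intro j; exact ⟨w j, k0, v, rfl⟩
  · ext c
    simp only [Set.mem_setOf_eq, Set.mem_iUnion]
    constructor
    · intro hc
      obtain ⟨m, hm, hmle⟩ := exists_min_le {c | H c = T} hc
      obtain ⟨j, hj⟩ : ∃ j, w j = m := by
        have : m ∈ Set.range w := hw ▸ hm
        exact this
      set d' : Λ → ℕ := fun s => c s - m s with hd'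
      have hdm : c = m + d' := sub_mem_le hmle
      have hHd' : H d' = 0 := by
        have h2 := hH m d'
        rw [← hdm, hc, hm.1] at h2
        exact (left_eq_add.mp h2)
      obtain ⟨n, hn⟩ := hom_gen H hH v hv d' hHd'
      exact ⟨j, n, by rw [hdm, hn, hj]⟩
    · rintro ⟨j, n, rfl⟩
      have hwj : H (w j) = T := by
        have : w j ∈ minOf {c | H c = T} := hw ▸ ⟨j, rfl⟩
        exact this.1
      have hvz : ∀ i, H (v i) = 0 := by
        intro i
        have : v i ∈ minOf ({x | H x = 0} \ {0}) := hv ▸ ⟨i, rfl⟩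
        exact this.1.1
      rw [hH, hom_sum H hH, hwj]
      simp [hvz]

end SolSet
section Closure
variable {Λ Λ' : Type*}

lemma image_semilinear [Fintype Λ'] (φ : (Λ' → ℕ) → (Λ → ℕ))
    (hφ : ∀ a b, φ (a + b) = φ a + φ b) {X : Set (Λ' → ℕ)}
    (hX : Semilinear X) : Semilinear (φ '' X) := by
  obtain ⟨k, L, hL, rfl⟩ := hX
  refine ⟨k, fun j => φ '' L j, ?_, by rw [Set.image_iUnion]⟩
  intro j
  obtain ⟨b, k0, v, hbv⟩ := hL j
  refine ⟨φ b, k0, fun i => φ (v i), ?_⟩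
  show φ '' L j = _
  rw [hbv]
  ext c
  constructor
  · rintro ⟨x, ⟨n, rfl⟩, rfl⟩
    exact ⟨n, by rw [hφ, hom_sum φ hφ]⟩
  · rintro ⟨n, rfl⟩
    exact ⟨b + ∑ i, n i • v i, ⟨n, rfl⟩, by rw [hφ, hom_sum φ hφ]⟩

lemma semilinear_iUnion {ι : Type*} [Fintype ι] (X : ι → Set (Λ → ℕ))
    (h : ∀ i, Semilinear (X i)) : Semilinear (⋃ i, X i) := by
  classical
  choose k L hL hX using h
  let σ := Σ i : ι, Fin (k i)
  let e := (Fintype.equivFin σ).symm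
  refine ⟨Fintype.card σ, fun j => L (e j).1 (e j).2, fun j => hL _ _, ?_⟩
  ext c
  simp only [Set.mem_iUnion]
  constructor
  · rintro ⟨i, hc⟩
    rw [hX i] at hc
    obtain ⟨t, ht⟩ := Set.mem_iUnion.mp hc
    refine ⟨e.symm ⟨i, t⟩, ?_⟩
    show c ∈ L (e (e.symm ⟨i, t⟩)).1 (e (e.symm ⟨i, t⟩)).2
    rw [Equiv.apply_symm_apply]
    exact ht
  · rintro ⟨j, hj⟩
    exact ⟨(e j).1, (hX _) ▸ Set.mem_iUnion.mpr ⟨(e j).2, hj⟩⟩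

lemma halfspaces_semilinear [Fintype Λ] (n : ℕ) (h : Fin n → (Λ → ℕ) → ℤ)
    (hadd : ∀ i a b, h i (a + b) = h i a + h i b) (t : Fin n → ℤ) :
    Semilinear {c | ∀ i, t i ≤ h i c} := by
  classical
  set H : ((Λ ⊕ Fin n) → ℕ) → (Fin n → ℤ) :=
    fun x i => h i (fun s => x (Sum.inl s)) - (x (Sum.inr i) : ℤ) with hH
  have hHadd : ∀ a b, H (a + b) = H a + H b := by
    intro a b
    funext i
    show h i ((fun s => a (Sum.inl s)) + (fun s => b (Sum.inl s)))
        - (((a + b) (Sum.inr i) : ℕ) : ℤ) = _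
    rw [hadd i]
    have hr : (a + b) (Sum.inr i) = a (Sum.inr i) + b (Sum.inr i) := rfl
    rw [hr]
    show _ = (h i (fun s => a (Sum.inl s)) - (a (Sum.inr i) : ℤ))
        + (h i (fun s => b (Sum.inl s)) - (b (Sum.inr i) : ℤ))
    push_cast
    ring
  have hsol := solset_semilinear H hHadd t
  set φ : ((Λ ⊕ Fin n) → ℕ) → (Λ → ℕ) := fun x s => x (Sum.inl s) with hφdef
  have hφ : ∀ a b, φ (a + b) = φ a + φ b := fun a b => rfl
  have himg : {c | ∀ i, t i ≤ h i c} = φ '' {x | H x = t} := by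
    ext c
    constructor
    · intro hc
      refine ⟨Sum.elim c (fun i => (h i c - t i).toNat), ?_, rfl⟩
      show H _ = t
      funext i
      simp only [hH]
      have h1 : (fun s => Sum.elim c (fun i => (h i c - t i).toNat) (Sum.inl s)) = c := rfl
      rw [h1]
      have h2 : ((h i c - t i).toNat : ℤ) = h i c - t i :=
        Int.toNat_of_nonneg (sub_nonneg.mpr (hc i))
      simp only [Sum.elim_inr, h2]
      ring
    · rintro ⟨x, hx, rfl⟩
      intro i
      have := congrFun hx i
      simp only [hH] at this
      have hnn : (0 : ℤ) ≤ (x (Sum.inr i) : ℤ) := Int.natCast_nonneg _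
      show t i ≤ h i (fun s => x (Sum.inl s))
      omega
  rw [himg]
  exact image_semilinear φ hφ hsol

end Closure
section CRNlem
variable {Λ : Type*}

lemma step_add (R : Set ((Λ → ℕ) × (Λ → ℕ))) {a b : Λ → ℕ} (e : Λ → ℕ)
    (h : Step R a b) : Step R (a + e) (b + e) := by
  obtain ⟨rp, hrp, hle, rfl⟩ := h
  refine ⟨rp, hrp, fun s => le_trans (hle s) (by show a s ≤ a s + e s; omega), ?_⟩
  funext s
  have := hle s
  show (a s - rp.1 s + rp.2 s) + e s = (a s + e s) - rp.1 s + rp.2 s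
  omega

lemma reach_add (R : Set ((Λ → ℕ) × (Λ → ℕ))) {a b : Λ → ℕ} (e : Λ → ℕ)
    (h : Reach R a b) : Reach R (a + e) (b + e) := by
  induction h with
  | refl => exact Relation.ReflTransGen.refl
  | tail _ h2 ih => exact ih.tail (step_add R e h2)

end CRNlem

/-- O ∩ W is semilinear. -/
theorem O_inter_W_semilinear {Λ : Type*} [Fintype Λ]
    (R : Set ((Λ → ℕ) × (Λ → ℕ))) (hR : R.Finite)
    (f : (Λ → ℕ) → ℤ) (hf : ∀ c c', f (c + c') = f c + f c')
    (V O W : Set (Λ → ℕ))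
    (hV : V = {c | 0 < f c})
    (hO : O = {c | ∀ c', Reach R c c' → c' ∈ V})
    (hW : W = {c | ∀ c', Reach R c c' → f c ≤ f c'}) :
    Semilinear (O ∩ W) := by
  classical
  subst hV hO hW
  set V : Set (Λ → ℕ) := {c | 0 < f c} with hV
  set W : Set (Λ → ℕ) := {c | ∀ c', Reach R c c' → f c ≤ f c'} with hW
  set O : Set (Λ → ℕ) := {c | ∀ c', Reach R c c' → c' ∈ V} with hO
  have hOW : O ∩ W = V ∩ W := by
    ext c
    simp only [Set.mem_inter_iff, hO, hV, hW, Set.mem_setOf_eq]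
    constructor
    · rintro ⟨h1, h2⟩
      exact ⟨h1 c Relation.ReflTransGen.refl, h2⟩
    · rintro ⟨h1, h2⟩
      exact ⟨fun c' hr => lt_of_lt_of_le h1 (h2 c' hr), h2⟩
  rw [hOW]
  have hWc : ∀ c ∉ W, ∀ d, c ≤ d → d ∉ W := by
    intro c hc d hcd hd
    apply hc
    rw [hW] at hd ⊢
    intro c' hr
    set e : Λ → ℕ := fun s => d s - c s with he
    have hde : d = c + e := by
      funext s
      have : c s ≤ d s := hcd s
      show d s = c s + (d s - c s)
      omega
    have h2 := hd (c' + e) (by rw [hde]; exact reach_add R e hr)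
    have h3 : f d = f c + f e := by rw [hde, hf]
    have h4 : f (c' + e) = f c' + f e := hf _ _
    omega
  obtain ⟨k, w, _, hwM⟩ := (minOf_finite Wᶜ).fin_param
  have hWeq : ∀ c, c ∈ W ↔ ∀ j : Fin k, ¬ w j ≤ c := by
    intro c
    constructor
    · intro hc j hle
      have hwj : w j ∈ minOf Wᶜ := hwM ▸ ⟨j, rfl⟩
      exact (hWc (w j) hwj.1 c hle) hc
    · intro hc
      by_contra hcW
      obtain ⟨m, hm, hmle⟩ := exists_min_le Wᶜ hcW
      obtain ⟨j, hj⟩ : m ∈ Set.range w := hwM ▸ hm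
      exact hc j (hj ▸ hmle)
  have hVW : V ∩ W = ⋃ σ : Fin k → Λ,
      {c : Λ → ℕ | 0 < f c ∧ ∀ j : Fin k, c (σ j) < w j (σ j)} := by
    ext c
    simp only [Set.mem_inter_iff, Set.mem_iUnion, Set.mem_setOf_eq, hV]
    constructor
    · rintro ⟨h1, h2⟩
      have h3 : ∀ j : Fin k, ∃ s, c s < w j s := by
        intro j
        have := (hWeq c).mp h2 j
        by_contra hno
        push_neg at hno
        exact this (fun s => hno s)
      choose σ hσ using h3
      exact ⟨σ, h1, hσ⟩
    · rintro ⟨σ, h1, h2⟩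
      refine ⟨h1, (hWeq c).mpr fun j hle => ?_⟩
      exact absurd (hle (σ j)) (not_le.mpr (h2 j))
  rw [hVW]
  apply semilinear_iUnion
  intro σ
  have hhalf := halfspaces_semilinear (k + 1)
    (Fin.cons f (fun j c => -(c (σ j) : ℤ)))
    (by
      intro i a b
      refine Fin.cases ?_ ?_ i
      · simp only [Fin.cons_zero]
        exact hf a b
      · intro j
        simp only [Fin.cons_succ, Pi.add_apply]
        push_cast
        ring)
    (Fin.cons 1 (fun j => 1 - (w j (σ j) : ℤ)))
  have heq : {c : Λ → ℕ | 0 < f c ∧ ∀ j : Fin k, c (σ j) < w j (σ j)}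
      = {c | ∀ i : Fin (k + 1), (Fin.cons 1 (fun j => 1 - (w j (σ j) : ℤ)) : Fin (k+1) → ℤ) i
          ≤ (Fin.cons f (fun j c => -(c (σ j) : ℤ)) : Fin (k+1) → (Λ → ℕ) → ℤ) i c} := by
    ext c
    simp only [Set.mem_setOf_eq, Fin.forall_fin_succ, Fin.cons_zero, Fin.cons_succ]
    constructor
    · rintro ⟨h1, h2⟩
      refine ⟨by omega, fun j => ?_⟩
      have := h2 j
      omega
    · rintro ⟨h1, h2⟩
      refine ⟨by omega, fun j => ?_⟩
      have := h2 j
      omega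
  rw [heq]
  exact hhalf
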